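/- Antisymmetry of the iterated double contour integral (from the proof of Lemma A.2). For y ∈ ℝ define F₁(y) = ∫_{Y₁∪Y₂} ( ∫_{Y₃∪Y₄} (sz/(s−z)) e^{−2i(ys + 4s³/3)} ds ) e^{2i(yz + 4z³/3)} dz and F₂(y) = ∫_{Y₃∪Y₄} ( ∫_{Y₁∪Y₂} (sz/(s−z)) e^{2i(ys + 4s³/3)} ds ) e^{−2i(yz + 4z³/3)} dz. Then for every y ∈ ℝ the corresponding double integrals (over the product of the parametrizing half-lines) converge absolutely and F₂(y) = −F₁(y). -/

import Mathlib

open MeasureTheory Set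

/-- The unit direction `e^{iπ/6}` of the ray `Y₁`. -/
noncomputable def e1 : ℂ := Complex.exp (Real.pi / 6 * Complex.I)

/-- The unit direction `e^{5iπ/6}` of the ray `Y₂`. -/
noncomputable def e5 : ℂ := Complex.exp (5 * Real.pi / 6 * Complex.I)

/-- The unit direction `e^{-iπ/6}` of the ray `Y₄`. -/
noncomputable def em1 : ℂ := Complex.exp (-(Real.pi / 6) * Complex.I)

/-- The unit direction `e^{-5iπ/6}` of the ray `Y₃`. -/
noncomputable def em5 : ℂ := Complex.exp (-(5 * Real.pi / 6) * Complex.I)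

/-- The contour integral over `Y₁ ∪ Y₂`. -/
noncomputable def CInt12 (h : ℂ → ℂ) : ℂ :=
  (∫ r in Ioi (0 : ℝ), h (r * e1)) * e1 - (∫ r in Ioi (0 : ℝ), h (r * e5)) * e5

/-- The contour integral over `Y₃ ∪ Y₄`. -/
noncomputable def CInt34 (h : ℂ → ℂ) : ℂ :=
  (∫ r in Ioi (0 : ℝ), h (r * em1)) * em1 - (∫ r in Ioi (0 : ℝ), h (r * em5)) * em5

/-- The integrand of `F₁`: `s` on `Y₃ ∪ Y₄`, `z` on `Y₁ ∪ Y₂`. -/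
noncomputable def K1 (y : ℝ) (s z : ℂ) : ℂ :=
  s * z / (s - z) * Complex.exp (-(2 * Complex.I) * (y * s + 4 * s ^ 3 / 3)) *
    Complex.exp (2 * Complex.I * (y * z + 4 * z ^ 3 / 3))

/-- The integrand of `F₂`: `s` on `Y₁ ∪ Y₂`, `z` on `Y₃ ∪ Y₄`. -/
noncomputable def K2 (y : ℝ) (s z : ℂ) : ℂ :=
  s * z / (s - z) * Complex.exp (2 * Complex.I * (y * s + 4 * s ^ 3 / 3)) *
    Complex.exp (-(2 * Complex.I) * (y * z + 4 * z ^ 3 / 3))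

/-- `F₁(y) = ∫_{Y₁∪Y₂} (∫_{Y₃∪Y₄} (sz/(s-z)) e^{-2i(ys+4s³/3)} ds) e^{2i(yz+4z³/3)} dz`. -/
noncomputable def F1 (y : ℝ) : ℂ :=
  CInt12 fun z => CInt34 fun s => K1 y s z

/-- `F₂(y) = ∫_{Y₃∪Y₄} (∫_{Y₁∪Y₂} (sz/(s-z)) e^{2i(ys+4s³/3)} ds) e^{-2i(yz+4z³/3)} dz`. -/
noncomputable def F2 (y : ℝ) : ℂ :=
  CInt34 fun z => CInt12 fun s => K2 y s z


def Dir12 (α : ℂ) : Prop := α.re ^ 2 = 3 / 4 ∧ α.im = 1 / 2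
def Dir34 (β : ℂ) : Prop := β.re ^ 2 = 3 / 4 ∧ β.im = -(1 / 2)

lemma sq_cos' : Real.cos (Real.pi / 6) ^ 2 = 3 / 4 := by
  rw [Real.cos_pi_div_six, div_pow, Real.sq_sqrt (by norm_num : (0:ℝ) ≤ 3)]; norm_num

lemma e1_spec : Dir12 e1 := by
  have hre : e1.re = Real.cos (Real.pi / 6) := by
    rw [e1, show ((Real.pi : ℂ) / 6 * Complex.I) = ((Real.pi / 6 : ℝ) : ℂ) * Complex.I by push_cast; ring,
      Complex.exp_ofReal_mul_I_re]
  have him : e1.im = Real.sin (Real.pi / 6) := by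
    rw [e1, show ((Real.pi : ℂ) / 6 * Complex.I) = ((Real.pi / 6 : ℝ) : ℂ) * Complex.I by push_cast; ring,
      Complex.exp_ofReal_mul_I_im]
  exact ⟨by rw [hre, sq_cos'], by rw [him, Real.sin_pi_div_six]⟩

lemma e5_spec : Dir12 e5 := by
  have h6 : (5 : ℝ) * Real.pi / 6 = Real.pi - Real.pi / 6 := by ring
  have hre : e5.re = Real.cos (5 * Real.pi / 6) := by
    rw [e5, show (5 * (Real.pi : ℂ) / 6 * Complex.I) = ((5 * Real.pi / 6 : ℝ) : ℂ) * Complex.I by push_cast; ring,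
      Complex.exp_ofReal_mul_I_re]
  have him : e5.im = Real.sin (5 * Real.pi / 6) := by
    rw [e5, show (5 * (Real.pi : ℂ) / 6 * Complex.I) = ((5 * Real.pi / 6 : ℝ) : ℂ) * Complex.I by push_cast; ring,
      Complex.exp_ofReal_mul_I_im]
  refine ⟨?_, ?_⟩
  · rw [hre, h6, Real.cos_pi_sub, neg_pow, sq_cos']; norm_num
  · rw [him, h6, Real.sin_pi_sub, Real.sin_pi_div_six]

lemma em1_spec : Dir34 em1 := by
  have hre : em1.re = Real.cos (-(Real.pi / 6)) := by
    rw [em1, show (-((Real.pi : ℂ) / 6) * Complex.I) = ((-(Real.pi / 6) : ℝ) : ℂ) * Complex.I by push_cast; ring,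
      Complex.exp_ofReal_mul_I_re]
  have him : em1.im = Real.sin (-(Real.pi / 6)) := by
    rw [em1, show (-((Real.pi : ℂ) / 6) * Complex.I) = ((-(Real.pi / 6) : ℝ) : ℂ) * Complex.I by push_cast; ring,
      Complex.exp_ofReal_mul_I_im]
  refine ⟨?_, ?_⟩
  · rw [hre, Real.cos_neg, sq_cos']
  · rw [him, Real.sin_neg, Real.sin_pi_div_six]

lemma em5_spec : Dir34 em5 := by
  have h6 : (5 : ℝ) * Real.pi / 6 = Real.pi - Real.pi / 6 := by ring
  have hre : em5.re = Real.cos (-(5 * Real.pi / 6)) := by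
    rw [em5, show (-(5 * (Real.pi : ℂ) / 6) * Complex.I) = ((-(5 * Real.pi / 6) : ℝ) : ℂ) * Complex.I by push_cast; ring,
      Complex.exp_ofReal_mul_I_re]
  have him : em5.im = Real.sin (-(5 * Real.pi / 6)) := by
    rw [em5, show (-(5 * (Real.pi : ℂ) / 6) * Complex.I) = ((-(5 * Real.pi / 6) : ℝ) : ℂ) * Complex.I by push_cast; ring,
      Complex.exp_ofReal_mul_I_im]
  refine ⟨?_, ?_⟩
  · rw [hre, Real.cos_neg, h6, Real.cos_pi_sub, neg_pow, sq_cos']; norm_num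
  · rw [him, Real.sin_neg, h6, Real.sin_pi_sub, Real.sin_pi_div_six]

lemma Dir12.norm' {α : ℂ} (h : Dir12 α) : ‖α‖ = 1 := by
  have h2 : ‖α‖ ^ 2 = 1 := by
    rw [Complex.sq_norm, Complex.normSq_apply, ← pow_two, ← pow_two, h.1, h.2]; norm_num
  have := norm_nonneg α
  nlinarith

lemma Dir34.norm' {β : ℂ} (h : Dir34 β) : ‖β‖ = 1 := by
  have h2 : ‖β‖ ^ 2 = 1 := by
    rw [Complex.sq_norm, Complex.normSq_apply, ← pow_two, ← pow_two, h.1, h.2]; norm_num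
  have := norm_nonneg β
  nlinarith

lemma Dir12.cube {α : ℂ} (h : Dir12 α) : α ^ 3 = Complex.I := by
  have h1 := h.1; have h2 := h.2
  apply Complex.ext <;>
    simp only [pow_succ, pow_zero, one_mul, Complex.mul_re, Complex.mul_im, Complex.I_re, Complex.I_im]
  · simp only [h2]; linear_combination α.re * h1
  · simp only [h2]; linear_combination 3/2 * h1

lemma Dir34.cube {β : ℂ} (h : Dir34 β) : β ^ 3 = -Complex.I := by
  have h1 := h.1; have h2 := h.2
  apply Complex.ext <;>
    simp only [pow_succ, pow_zero, one_mul, Complex.mul_re, Complex.mul_im, Complex.I_re,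
      Complex.I_im, Complex.neg_re, Complex.neg_im]
  · simp only [h2]; linear_combination β.re * h1
  · simp only [h2]; linear_combination (-3/2 : ℝ) * h1

lemma sep' {α β : ℂ} (hα : Dir12 α) (hβ : Dir34 β) {r t : ℝ} (hr : 0 ≤ r) (ht : 0 ≤ t) :
    (r + t) / 2 ≤ ‖(r : ℂ) * β - (t : ℂ) * α‖ := by
  have hsq : ‖(r : ℂ) * β - (t : ℂ) * α‖ ^ 2
      = (r * β.re - t * α.re) ^ 2 + (r * β.im - t * α.im) ^ 2 := by
    rw [Complex.sq_norm, Complex.normSq_apply]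
    simp [Complex.sub_re, Complex.sub_im, Complex.mul_re, Complex.mul_im]
    ring
  have h2 : ((r + t) / 2) ^ 2 ≤ ‖(r : ℂ) * β - (t : ℂ) * α‖ ^ 2 := by
    rw [hsq, hα.2, hβ.2]
    nlinarith [sq_nonneg (r * β.re - t * α.re)]
  nlinarith [norm_nonneg ((r : ℂ) * β - (t : ℂ) * α), h2]

lemma frac_bound {α β : ℂ} (hα : Dir12 α) (hβ : Dir34 β) {r t : ℝ} (hr : 0 < r) (ht : 0 < t) :
    ‖(r : ℂ) * β * ((t : ℂ) * α) / ((r : ℂ) * β - (t : ℂ) * α)‖ ≤ 2 * (r + t) := by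
  have hs := sep' hα hβ hr.le ht.le
  have hpos : (0 : ℝ) < ‖(r : ℂ) * β - (t : ℂ) * α‖ := by linarith
  rw [norm_div, div_le_iff₀ hpos]
  have hnum : ‖(r : ℂ) * β * ((t : ℂ) * α)‖ = r * t := by
    simp [norm_mul, hα.norm', hβ.norm', Complex.norm_real, abs_of_pos hr, abs_of_pos ht]
  rw [hnum]
  nlinarith [sq_nonneg (r - t)]

lemma exp_re_s (y r : ℝ) {β : ℂ} (hβ : Dir34 β) :
    (-(2 * Complex.I) * ((y:ℂ) * ((r:ℂ) * β) + 4 * ((r:ℂ) * β) ^ 3 / 3)).re = -(y * r) - 8 * r ^ 3 / 3 := by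
  have hc := hβ.cube
  have h : -(2 * Complex.I) * ((y:ℂ) * ((r:ℂ) * β) + 4 * ((r:ℂ) * β) ^ 3 / 3)
      = ((-(2 * y * r) : ℝ) : ℂ) * (Complex.I * β) + ((-(8 * r ^ 3 / 3) : ℝ) : ℂ) := by
    push_cast
    linear_combination (-(8 : ℂ) / 3 * (r : ℂ) ^ 3 * Complex.I) * hc
      + ((8 : ℂ) / 3 * (r : ℂ) ^ 3) * Complex.I_sq
  rw [h]
  simp [Complex.add_re, Complex.re_ofReal_mul, Complex.mul_re, Complex.I_re, Complex.I_im, hβ.2,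
    ← Complex.ofReal_pow]
  ring

lemma exp_re_z (y t : ℝ) {α : ℂ} (hα : Dir12 α) :
    (2 * Complex.I * ((y:ℂ) * ((t:ℂ) * α) + 4 * ((t:ℂ) * α) ^ 3 / 3)).re = -(y * t) - 8 * t ^ 3 / 3 := by
  have hc := hα.cube
  have h : 2 * Complex.I * ((y:ℂ) * ((t:ℂ) * α) + 4 * ((t:ℂ) * α) ^ 3 / 3)
      = ((2 * y * t : ℝ) : ℂ) * (Complex.I * α) + ((-(8 * t ^ 3 / 3) : ℝ) : ℂ) := by
    push_cast
    linear_combination ((8 : ℂ) / 3 * (t : ℂ) ^ 3 * Complex.I) * hc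
      + ((8 : ℂ) / 3 * (t : ℂ) ^ 3) * Complex.I_sq
  rw [h]
  simp [Complex.add_re, Complex.re_ofReal_mul, Complex.mul_re, Complex.I_re, Complex.I_im, hα.2,
    ← Complex.ofReal_pow]
  ring

lemma poly_bound {a r : ℝ} (ha : 1 ≤ a) (hr : 0 ≤ r) : a * r ≤ a ^ 2 + 8 * r ^ 3 / 3 := by
  rcases le_or_gt r a with h | h
  · nlinarith [mul_le_mul_of_nonneg_left h (le_trans zero_le_one ha), pow_nonneg hr 3]
  · nlinarith [mul_le_mul_of_nonneg_right h.le hr,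
      mul_nonneg (mul_nonneg hr hr) (by linarith : (0:ℝ) ≤ r - 1)]

lemma Ebound (y : ℝ) {r : ℝ} (hr : 0 ≤ r) :
    Real.exp (-(y * r) - 8 * r ^ 3 / 3) ≤ Real.exp ((|y| + 2) ^ 2) * Real.exp (-r) := by
  rw [← Real.exp_add]
  apply Real.exp_le_exp.2
  have h := poly_bound (a := |y| + 2) (by linarith [abs_nonneg y]) hr
  nlinarith [abs_nonneg y, neg_abs_le y, mul_le_mul_of_nonneg_right (neg_abs_le y) hr]

lemma Ebound' (y : ℝ) {r : ℝ} (hr : 0 ≤ r) :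
    r * Real.exp (-(y * r) - 8 * r ^ 3 / 3) ≤ Real.exp ((|y| + 2) ^ 2) * Real.exp (-r) := by
  have h1 : r * Real.exp (-(y * r) - 8 * r ^ 3 / 3) ≤ Real.exp r * Real.exp (-(y * r) - 8 * r ^ 3 / 3) := by
    apply mul_le_mul_of_nonneg_right _ (Real.exp_nonneg _)
    linarith [Real.add_one_le_exp r]
  rw [← Real.exp_add] at h1
  refine h1.trans ?_
  rw [← Real.exp_add]
  apply Real.exp_le_exp.2
  have h := poly_bound (a := |y| + 2) (by linarith [abs_nonneg y]) hr
  nlinarith [mul_le_mul_of_nonneg_right (neg_abs_le y) hr]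

lemma K1_norm_bound (y : ℝ) {α β : ℂ} (hα : Dir12 α) (hβ : Dir34 β) {r t : ℝ}
    (hr : 0 < r) (ht : 0 < t) :
    ‖K1 y (↑r * β) (↑t * α)‖ ≤
      4 * Real.exp ((|y| + 2) ^ 2) * Real.exp ((|y| + 2) ^ 2) * (Real.exp (-r) * Real.exp (-t)) := by
  have hnorm : ‖K1 y (↑r * β) (↑t * α)‖
      = ‖(r : ℂ) * β * ((t : ℂ) * α) / ((r : ℂ) * β - (t : ℂ) * α)‖
        * Real.exp (-(y * r) - 8 * r ^ 3 / 3) * Real.exp (-(y * t) - 8 * t ^ 3 / 3) := by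
    rw [K1, norm_mul, norm_mul, Complex.norm_exp, Complex.norm_exp,
      exp_re_s y r hβ, exp_re_z y t hα]
  rw [hnorm]
  have hfrac := frac_bound hα hβ hr ht
  set C := Real.exp ((|y| + 2) ^ 2) with hC
  have hE1 := Ebound y hr.le
  have hE2 := Ebound y ht.le
  have hE1' := Ebound' y hr.le
  have hE2' := Ebound' y ht.le
  set Er := Real.exp (-(y * r) - 8 * r ^ 3 / 3)
  set Et := Real.exp (-(y * t) - 8 * t ^ 3 / 3)
  have hErpos : (0:ℝ) < Er := Real.exp_pos _
  have hEtpos : (0:ℝ) < Et := Real.exp_pos _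
  calc ‖(r : ℂ) * β * ((t : ℂ) * α) / ((r : ℂ) * β - (t : ℂ) * α)‖ * Er * Et
      ≤ (2 * (r + t)) * Er * Et := by
        apply mul_le_mul_of_nonneg_right (mul_le_mul_of_nonneg_right hfrac hErpos.le) hEtpos.le
    _ = 2 * ((r * Er) * Et + Er * (t * Et)) := by ring
    _ ≤ 2 * ((C * Real.exp (-r)) * (C * Real.exp (-t)) + (C * Real.exp (-r)) * (C * Real.exp (-t))) := by
        gcongr
    _ = 4 * C * C * (Real.exp (-r) * Real.exp (-t)) := by ring

lemma K1_contOn (y : ℝ) {α β : ℂ} (hα : Dir12 α) (hβ : Dir34 β) :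
    ContinuousOn (fun p : ℝ × ℝ => K1 y (p.1 * β) (p.2 * α)) ((Ioi (0:ℝ)) ×ˢ (Ioi (0:ℝ))) := by
  have hne : ∀ p : ℝ × ℝ, p ∈ (Ioi (0:ℝ)) ×ˢ (Ioi (0:ℝ)) →
      ((p.1 : ℂ) * β - (p.2 : ℂ) * α) ≠ 0 := by
    intro p hp
    have h1 : (0:ℝ) < p.1 := hp.1
    have h2 : (0:ℝ) < p.2 := hp.2
    have := sep' hα hβ h1.le h2.le
    intro hzero
    rw [hzero, norm_zero] at this
    linarith
  simp only [K1]
  apply ContinuousOn.mul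
  apply ContinuousOn.mul
  · exact ContinuousOn.div (by fun_prop) (by fun_prop) hne
  · fun_prop
  · fun_prop

lemma K1_integrable (y : ℝ) {α β : ℂ} (hα : Dir12 α) (hβ : Dir34 β) :
    IntegrableOn (fun p : ℝ × ℝ => K1 y (p.1 * β) (p.2 * α)) ((Ioi (0:ℝ)) ×ˢ (Ioi (0:ℝ))) := by
  have hmeas : MeasurableSet ((Ioi (0:ℝ)) ×ˢ (Ioi (0:ℝ))) :=
    measurableSet_Ioi.prod measurableSet_Ioi
  have hexp : IntegrableOn (fun x : ℝ => Real.exp (-x)) (Ioi (0:ℝ)) := by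
    simpa using exp_neg_integrableOn_Ioi 0 one_pos
  have hg : Integrable (fun p : ℝ × ℝ =>
      4 * Real.exp ((|y| + 2) ^ 2) * Real.exp ((|y| + 2) ^ 2) * (Real.exp (-p.1) * Real.exp (-p.2)))
      (volume.restrict ((Ioi (0:ℝ)) ×ˢ (Ioi (0:ℝ)))) := by
    have := (hexp.mul_prod hexp).const_mul
      (4 * Real.exp ((|y| + 2) ^ 2) * Real.exp ((|y| + 2) ^ 2))
    rwa [Measure.prod_restrict, ← Measure.volume_eq_prod] at this
  refine Integrable.mono' hg ((K1_contOn y hα hβ).aestronglyMeasurable hmeas) ?_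
  rw [ae_restrict_iff' hmeas]
  filter_upwards with p hp
  exact K1_norm_bound y hα hβ hp.1 hp.2

lemma K2_eq (y : ℝ) (s z : ℂ) : K2 y s z = -K1 y z s := by
  rw [K1, K2, show z - s = -(s - z) by ring, div_neg]
  ring

/-- Antisymmetry of the iterated double contour integral (from the proof of Lemma A.2):
the double integrals converge absolutely and `F₂(y) = -F₁(y)`. -/
theorem double_contour_antisymmetry (y : ℝ) :
    (∀ α ∈ ({e1, e5} : Set ℂ), ∀ β ∈ ({em1, em5} : Set ℂ),
      IntegrableOn (fun p : ℝ × ℝ => K1 y (p.1 * β) (p.2 * α))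
        ((Ioi (0 : ℝ)) ×ˢ (Ioi (0 : ℝ)))) ∧
    (∀ α ∈ ({e1, e5} : Set ℂ), ∀ β ∈ ({em1, em5} : Set ℂ),
      IntegrableOn (fun p : ℝ × ℝ => K2 y (p.1 * α) (p.2 * β))
        ((Ioi (0 : ℝ)) ×ˢ (Ioi (0 : ℝ)))) ∧
    F2 y = -F1 y := by
  have hdir12 : ∀ α ∈ ({e1, e5} : Set ℂ), Dir12 α := by
    rintro α (rfl | rfl)
    exacts [e1_spec, e5_spec]
  have hdir34 : ∀ β ∈ ({em1, em5} : Set ℂ), Dir34 β := by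
    rintro β (rfl | rfl)
    exacts [em1_spec, em5_spec]
  -- product-measure form of integrability
  have hInt : ∀ (α β : ℂ), Dir12 α → Dir34 β →
      Integrable (fun p : ℝ × ℝ => K1 y (p.1 * β) (p.2 * α))
        ((volume.restrict (Ioi (0:ℝ))).prod (volume.restrict (Ioi (0:ℝ)))) := by
    intro α β hα hβ
    have := K1_integrable y hα hβ
    rwa [IntegrableOn, Measure.volume_eq_prod, ← Measure.prod_restrict] at this
  refine ⟨fun α hα β hβ => K1_integrable y (hdir12 α hα) (hdir34 β hβ), ?_, ?_⟩
  · -- K2 integrability by swapping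
    intro α hα β hβ
    have h := (hInt α β (hdir12 α hα) (hdir34 β hβ)).swap
    have h2 : Integrable (fun p : ℝ × ℝ => K1 y (p.2 * β) (p.1 * α))
        ((volume.restrict (Ioi (0:ℝ))).prod (volume.restrict (Ioi (0:ℝ)))) := h
    have h3 := h2.neg
    have heq : (fun p : ℝ × ℝ => K2 y (p.1 * α) (p.2 * β))
        = fun p : ℝ × ℝ => -K1 y (p.2 * β) (p.1 * α) := by
      funext p; exact K2_eq y _ _
    rw [IntegrableOn, Measure.volume_eq_prod, ← Measure.prod_restrict, heq]
    exact h3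
  · -- main equality
    have fub : ∀ (α β : ℂ), Dir12 α → Dir34 β →
        (∫ r in Ioi (0:ℝ), ∫ t in Ioi (0:ℝ), K1 y (r * β) (t * α))
          = ∫ t in Ioi (0:ℝ), ∫ r in Ioi (0:ℝ), K1 y (r * β) (t * α) := by
      intro α β hα hβ
      exact integral_integral_swap (hInt α β hα hβ)
    have hA : ∀ (α : ℂ), Dir12 α →
        (∫ t in Ioi (0:ℝ), CInt34 fun s => K1 y s (t * α))
          = (∫ t in Ioi (0:ℝ), ∫ r in Ioi (0:ℝ), K1 y (r * em1) (t * α)) * em1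
          - (∫ t in Ioi (0:ℝ), ∫ r in Ioi (0:ℝ), K1 y (r * em5) (t * α)) * em5 := by
      intro α hα
      simp only [CInt34]
      rw [integral_sub (((hInt α em1 hα em1_spec).integral_prod_right).mul_const em1)
        (((hInt α em5 hα em5_spec).integral_prod_right).mul_const em5),
        integral_mul_const, integral_mul_const]
    have hB : ∀ (β : ℂ), Dir34 β →
        (∫ r in Ioi (0:ℝ), CInt12 fun s => K2 y s (r * β))
          = (∫ r in Ioi (0:ℝ), ∫ t in Ioi (0:ℝ), K1 y (r * β) (t * e5)) * e5
          - (∫ r in Ioi (0:ℝ), ∫ t in Ioi (0:ℝ), K1 y (r * β) (t * e1)) * e1 := by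
      intro β hβ
      simp only [CInt12, K2_eq, integral_neg]
      have hfun : (fun r : ℝ => (-∫ a in Ioi (0:ℝ), K1 y (r * β) (a * e1)) * e1
            - (-∫ a in Ioi (0:ℝ), K1 y (r * β) (a * e5)) * e5)
          = fun r : ℝ => (∫ a in Ioi (0:ℝ), K1 y (r * β) (a * e5)) * e5
            - (∫ a in Ioi (0:ℝ), K1 y (r * β) (a * e1)) * e1 := by
        funext r; ring
      rw [hfun, integral_sub (((hInt e5 β e5_spec hβ).integral_prod_left).mul_const e5)
        (((hInt e1 β e1_spec hβ).integral_prod_left).mul_const e1),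
        integral_mul_const, integral_mul_const]
    have hF1 : F1 y
        = ((∫ t in Ioi (0:ℝ), ∫ r in Ioi (0:ℝ), K1 y (r * em1) (t * e1)) * em1
          - (∫ t in Ioi (0:ℝ), ∫ r in Ioi (0:ℝ), K1 y (r * em5) (t * e1)) * em5) * e1
          - ((∫ t in Ioi (0:ℝ), ∫ r in Ioi (0:ℝ), K1 y (r * em1) (t * e5)) * em1
          - (∫ t in Ioi (0:ℝ), ∫ r in Ioi (0:ℝ), K1 y (r * em5) (t * e5)) * em5) * e5 := by
      rw [F1, CInt12, hA e1 e1_spec, hA e5 e5_spec]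
    have hF2 : F2 y
        = ((∫ t in Ioi (0:ℝ), ∫ r in Ioi (0:ℝ), K1 y (r * em1) (t * e5)) * e5
          - (∫ t in Ioi (0:ℝ), ∫ r in Ioi (0:ℝ), K1 y (r * em1) (t * e1)) * e1) * em1
          - ((∫ t in Ioi (0:ℝ), ∫ r in Ioi (0:ℝ), K1 y (r * em5) (t * e5)) * e5
          - (∫ t in Ioi (0:ℝ), ∫ r in Ioi (0:ℝ), K1 y (r * em5) (t * e1)) * e1) * em5 := by
      rw [F2, CInt34, hB em1 em1_spec, hB em5 em5_spec,
        fub e1 em1 e1_spec em1_spec, fub e5 em1 e5_spec em1_spec,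
        fub e1 em5 e1_spec em5_spec, fub e5 em5 e5_spec em5_spec]
    rw [hF1, hF2]
    ring
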